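/- Let a, c, u ∈ ℂ with c not a nonpositive integer and u ≠ −1/2, and set δ := (1/2)(a − c + 1/2)(a − 1/2). Then for every complex x with |x| < 1: −x(1−x)·∂ₓF(a+u, a−u; c; x) + (−(1/2 − a)x − (1/2)c + 1/2 + (u + 1/2)(x − 1/2) + δ/(u + 1/2))·F(a+u, a−u; c; x) = ((a+u)(a−c−u)/(2(u + 1/2)))·F(a+u+1, a−u−1; c; x). -/

import Mathlib

open Filter Topology Finset

/-- The Gauss hypergeometric series F(a,b;c;x) = ∑ (a)ₖ(b)ₖ/((c)ₖ k!) xᵏ. -/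
noncomputable def gauss2F1 (a b c x : ℂ) : ℂ :=
  ∑' k : ℕ, ((ascPochhammer ℂ k).eval a * (ascPochhammer ℂ k).eval b)
    / ((ascPochhammer ℂ k).eval c * (Nat.factorial k : ℂ)) * x ^ k

/-! ### Auxiliary definitions and lemmas -/

noncomputable def hgCoef (a b c : ℂ) (k : ℕ) : ℂ :=
  ((ascPochhammer ℂ k).eval a * (ascPochhammer ℂ k).eval b)
    / ((ascPochhammer ℂ k).eval c * (Nat.factorial k : ℂ))

lemma gauss2F1_eq (a b c x : ℂ) :
    gauss2F1 a b c x = ∑' k : ℕ, hgCoef a b c k * x ^ k := rfl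

lemma hgCoef_zero (a b c : ℂ) : hgCoef a b c 0 = 1 := by
  simp [hgCoef]

lemma hgCoef_succ (a b c : ℂ) (k : ℕ) :
    hgCoef a b c (k + 1)
      = hgCoef a b c k * ((a + k) * (b + k) / ((c + k) * ((k : ℂ) + 1))) := by
  rw [hgCoef, hgCoef, ascPochhammer_succ_eval, ascPochhammer_succ_eval,
    ascPochhammer_succ_eval, div_mul_div_comm]
  congr 1
  · ring
  · push_cast [Nat.factorial_succ]; ring

lemma st17_eval_succ_left (w : ℂ) (k : ℕ) :
    (ascPochhammer ℂ (k + 1)).eval w = w * (ascPochhammer ℂ k).eval (w + 1) := by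
  simp [ascPochhammer_succ_left, Polynomial.eval_comp]

lemma st17_poch_ne_zero {c : ℂ} (hc : ∀ n : ℕ, c ≠ -(n : ℂ)) (k : ℕ) :
    (ascPochhammer ℂ k).eval c ≠ 0 := by
  induction k with
  | zero => simp
  | succ k ih =>
    rw [ascPochhammer_succ_eval]
    refine mul_ne_zero ih fun h => hc k ?_
    linear_combination h

lemma st17_tendsto_ratio (w z : ℂ) :
    Tendsto (fun n : ℕ => (w + n) / (z + n)) atTop (𝓝 1) := by
  have h0 : Tendsto (fun n : ℕ => (w - z) / (z + n)) atTop (𝓝 0) := by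
    apply squeeze_zero_norm' (a := fun n : ℕ => ‖w - z‖ / ((n : ℝ) - ‖z‖))
    · filter_upwards [eventually_gt_atTop ⌈‖z‖⌉₊] with n hn
      have h1 : ‖z‖ < (n : ℝ) := lt_of_le_of_lt (Nat.le_ceil _) (by exact_mod_cast hn)
      have h2 : (n : ℝ) - ‖z‖ ≤ ‖z + n‖ := by
        calc (n : ℝ) - ‖z‖ = ‖((n : ℕ) : ℂ)‖ - ‖-z‖ := by simp
        _ ≤ ‖(n : ℂ) - -z‖ := norm_sub_norm_le _ _
        _ = ‖z + n‖ := by ring_nf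
      rw [norm_div]
      exact div_le_div_of_nonneg_left (norm_nonneg _) (by linarith) h2
    · apply Tendsto.div_atTop tendsto_const_nhds
      exact tendsto_atTop_add_const_right _ _ tendsto_natCast_atTop_atTop
  have heq : ∀ᶠ n : ℕ in atTop, 1 + (w - z) / (z + n) = (w + n) / (z + n) := by
    filter_upwards [eventually_gt_atTop ⌈‖z‖⌉₊] with n hn
    have h1 : ‖z‖ < (n : ℝ) := lt_of_le_of_lt (Nat.le_ceil _) (by exact_mod_cast hn)
    have hz : z + n ≠ 0 := by
      intro h
      have : ‖z‖ = (n : ℝ) := by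
        have : z = -n := by linear_combination h
        rw [this]; simp
      linarith
    field_simp
    ring
  have := (h0.const_add 1)
  simpa using this.congr' heq

lemma st17_tendsto_q (a b c : ℂ) :
    Tendsto (fun n : ℕ => ‖(a + n) * (b + n) / ((c + n) * ((n : ℂ) + 1))‖)
      atTop (𝓝 1) := by
  have h : ∀ n : ℕ, (a + n) * (b + n) / ((c + n) * ((n : ℂ) + 1))
      = ((a + n) / ((1 : ℂ) + n)) * ((b + n) / (c + n)) := by
    intro n
    rw [div_mul_div_comm]
    congr 1
    ring
  have h2 : Tendsto (fun n : ℕ => (a + n) * (b + n) / ((c + n) * ((n : ℂ) + 1)))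
      atTop (𝓝 1) := by
    rw [funext h]
    simpa using (st17_tendsto_ratio a 1).mul (st17_tendsto_ratio b c)
  simpa using h2.norm

lemma st17_summable_master {E : Type*} [NormedAddCommGroup E] [CompleteSpace E]
    (f : ℕ → E) (ρ : ℕ → ℝ) (l : ℝ)
    (hρ : ∀ n, ‖f (n + 1)‖ ≤ ρ n * ‖f n‖) (hlim : Tendsto ρ atTop (𝓝 l))
    (hl : l < 1) : Summable f := by
  refine summable_of_ratio_norm_eventually_le (r := (l + 1) / 2) (by linarith) ?_
  have hev : ∀ᶠ n in atTop, ρ n ≤ (l + 1) / 2 :=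
    hlim.eventually (eventually_le_nhds (by linarith))
  filter_upwards [hev] with n hn
  exact (hρ n).trans (mul_le_mul_of_nonneg_right hn (norm_nonneg _))

lemma st17_summable (a b c x : ℂ) (hx : ‖x‖ < 1) :
    Summable (fun n : ℕ => hgCoef a b c n * x ^ n) := by
  apply st17_summable_master _
    (fun n => ‖(a + n) * (b + n) / ((c + n) * ((n : ℂ) + 1))‖ * ‖x‖) ‖x‖ _ _ hx
  · intro n
    apply le_of_eq
    rw [hgCoef_succ, pow_succ]
    simp only [norm_mul]
    ring
  · simpa using (st17_tendsto_q a b c).mul_const ‖x‖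

lemma st17_summable_deriv_bound (a b c : ℂ) (r : ℝ) (hr0 : 0 ≤ r) (hr1 : r < 1) :
    Summable (fun n : ℕ => ‖hgCoef a b c n‖ * ((n : ℝ) * r ^ (n - 1))) := by
  rw [← summable_nat_add_iff 1]
  apply st17_summable_master _
    (fun n => ‖(a + (n+1:ℕ)) * (b + (n+1:ℕ)) / ((c + (n+1:ℕ)) * (((n+1:ℕ) : ℂ) + 1))‖
      * (((n : ℝ) + 2) / ((n : ℝ) + 1)) * r) r _ _ hr1
  · intro n
    have hn1 : ((n : ℝ) + 1) ≠ 0 := by positivity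
    rw [Real.norm_eq_abs, Real.norm_eq_abs]
    rw [abs_of_nonneg (show (0:ℝ) ≤ ‖hgCoef a b c (n+1+1)‖ * (((n+1+1:ℕ):ℝ) * r ^ (n+1+1-1)) by positivity)]
    refine le_trans (le_of_eq ?_) (mul_le_mul_of_nonneg_left (le_abs_self _) (by positivity))
    simp only [Nat.add_sub_cancel]
    rw [show n + 1 + 1 = (n + 1) + 1 from rfl, hgCoef_succ, norm_mul, pow_succ]
    set Q := ‖(a + ((n+1:ℕ):ℂ)) * (b + ((n+1:ℕ):ℂ)) / ((c + ((n+1:ℕ):ℂ)) * (((n+1:ℕ):ℂ) + 1))‖ with hQ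
    set C := ‖hgCoef a b c (n+1)‖ with hC
    push_cast
    have hcancel : ((n:ℝ)+2)/((n:ℝ)+1) * ((n:ℝ)+1) = (n:ℝ)+2 := div_mul_cancel₀ _ hn1
    linear_combination (-(Q * r * C * r^n)) * hcancel
  · have h1 : Tendsto (fun n : ℕ =>
        ‖(a + (n+1:ℕ)) * (b + (n+1:ℕ)) / ((c + (n+1:ℕ)) * (((n+1:ℕ) : ℂ) + 1))‖)
        atTop (𝓝 1) := (st17_tendsto_q a b c).comp (tendsto_add_atTop_nat 1)
    have h2 : Tendsto (fun n : ℕ => ((n : ℝ) + 2) / ((n : ℝ) + 1)) atTop (𝓝 1) := by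
      have he : ∀ n : ℕ, ((n : ℝ) + 2) / ((n : ℝ) + 1) = 1 + 1 / ((n : ℝ) + 1) := by
        intro n
        have : ((n : ℝ) + 1) ≠ 0 := by positivity
        field_simp
        ring
      rw [funext he]
      simpa using (tendsto_one_div_add_atTop_nhds_zero_nat :
        Tendsto (fun n : ℕ => 1 / ((n : ℝ) + 1)) atTop (𝓝 0)).const_add (1 : ℝ)
    simpa using (h1.mul h2).mul_const r

lemma st17_deriv (a b c x : ℂ) (hx : ‖x‖ < 1) :
    ∃ D : ℂ, HasSum (fun n : ℕ => hgCoef a b c n * ((n : ℂ) * x ^ (n - 1))) D ∧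
      deriv (fun y => gauss2F1 a b c y) x = D := by
  set r : ℝ := (‖x‖ + 1) / 2 with hr
  have h0x : (0:ℝ) ≤ ‖x‖ := norm_nonneg x
  have hr0 : 0 ≤ r := by rw [hr]; linarith
  have hxr : ‖x‖ < r := by rw [hr]; linarith
  have hr1 : r < 1 := by rw [hr]; linarith
  have hu : Summable (fun n : ℕ => ‖hgCoef a b c n‖ * ((n : ℝ) * r ^ (n - 1))) :=
    st17_summable_deriv_bound a b c r hr0 hr1
  have hbound : ∀ (n : ℕ) (y : ℂ), y ∈ Metric.ball (0:ℂ) r →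
      ‖hgCoef a b c n * ((n : ℂ) * y ^ (n - 1))‖ ≤ ‖hgCoef a b c n‖ * ((n : ℝ) * r ^ (n - 1)) := by
    intro n y hy
    rw [mem_ball_zero_iff] at hy
    rw [norm_mul, norm_mul, norm_pow, Complex.norm_natCast]
    gcongr
  have H := hasDerivAt_tsum_of_isPreconnected hu Metric.isOpen_ball
    (convex_ball (0:ℂ) r).isPreconnected
    (g := fun n y => hgCoef a b c n * y ^ n)
    (g' := fun n y => hgCoef a b c n * ((n : ℂ) * y ^ (n - 1)))
    (fun n y _ => (hasDerivAt_pow n y).const_mul (hgCoef a b c n))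
    hbound
    (Metric.mem_ball_self (by linarith))
    (by
      apply summable_of_ne_finset_zero (s := ({0} : Finset ℕ))
      intro n hn
      have : n ≠ 0 := by simpa using hn
      simp [zero_pow this])
    (mem_ball_zero_iff.mpr hxr)
  have hsum : Summable (fun n : ℕ => hgCoef a b c n * ((n : ℂ) * x ^ (n - 1))) :=
    Summable.of_norm_bounded hu (fun n => hbound n x (mem_ball_zero_iff.mpr hxr))
  refine ⟨∑' n : ℕ, hgCoef a b c n * ((n : ℂ) * x ^ (n - 1)), hsum.hasSum, ?_⟩
  exact H.deriv

lemma st17_lemA (A B c : ℂ) (hc : ∀ n : ℕ, c ≠ -(n : ℂ)) (k : ℕ) :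
    A * hgCoef (A + 1) (B - 1) c (k + 1) * ((c + (k:ℂ)) * ((k:ℂ) + 1))
      = (B - 1) * (A + (k:ℂ)) * (A + (k:ℂ) + 1) * hgCoef A B c k := by
  have hPc : (ascPochhammer ℂ k).eval c ≠ 0 := st17_poch_ne_zero hc k
  have hck : c + (k:ℂ) ≠ 0 := fun h => hc k (by linear_combination h)
  have hk1 : ((k:ℂ) + 1) ≠ 0 := by
    exact_mod_cast Nat.cast_add_one_ne_zero (R := ℂ) k
  have hfac : ((Nat.factorial k : ℕ) : ℂ) ≠ 0 := by
    exact_mod_cast Nat.cast_ne_zero.mpr (Nat.factorial_ne_zero k)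
  have hrel : (ascPochhammer ℂ k).eval A * (A + (k:ℂ))
      = A * (ascPochhammer ℂ k).eval (A + 1) := by
    rw [← ascPochhammer_succ_eval, st17_eval_succ_left]
  have hB : (B - 1) + 1 = B := by ring
  rw [hgCoef, hgCoef, ascPochhammer_succ_eval, st17_eval_succ_left (B-1) k, hB,
    ascPochhammer_succ_eval, Nat.factorial_succ]
  push_cast
  set PA := Polynomial.eval A (ascPochhammer ℂ k)
  set PA1 := Polynomial.eval (A+1) (ascPochhammer ℂ k)
  set PB := Polynomial.eval B (ascPochhammer ℂ k)
  set PC := Polynomial.eval c (ascPochhammer ℂ k)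
  set KF := ((Nat.factorial k : ℕ) : ℂ)
  have e1 : A * (PA1 * (A+1+(k:ℂ)) * ((B-1) * PB) / (PC * (c+(k:ℂ)) * (((k:ℂ)+1) * KF)))
        * ((c+(k:ℂ)) * ((k:ℂ)+1))
      = (A * PA1) * ((A+1+(k:ℂ)) * (B-1) * PB)
        * (((c+(k:ℂ)) * ((k:ℂ)+1)) / (PC * (c+(k:ℂ)) * (((k:ℂ)+1) * KF))) := by ring
  have e2 : ((c+(k:ℂ)) * ((k:ℂ)+1)) / (PC * (c+(k:ℂ)) * (((k:ℂ)+1) * KF)) = 1 / (PC * KF) := by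
    rw [div_eq_div_iff (by exact mul_ne_zero (mul_ne_zero hPc hck) (mul_ne_zero hk1 hfac))
      (mul_ne_zero hPc hfac)]
    ring
  rw [e1, e2, ← hrel]
  ring

lemma st17_cid (A B c β γ' : ℂ) (hc : ∀ n : ℕ, c ≠ -(n : ℂ)) (k : ℕ)
    (hkey : (β - ((k:ℂ)+1)) * ((A+(k:ℂ)) * (B+(k:ℂ))) + ((k:ℂ)+A) * ((c+(k:ℂ)) * ((k:ℂ)+1))
      = γ' * (B-1) * (A+(k:ℂ)) * (A+(k:ℂ)+1)) :
    (β - ((k:ℂ)+1)) * hgCoef A B c (k+1) + ((k:ℂ)+A) * hgCoef A B c k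
      = (γ' * A) * hgCoef (A+1) (B-1) c (k+1) := by
  have hck : c + (k:ℂ) ≠ 0 := fun h => hc k (by linear_combination h)
  have hk1 : ((k:ℂ) + 1) ≠ 0 := Nat.cast_add_one_ne_zero k
  have hw : (c+(k:ℂ)) * ((k:ℂ)+1) ≠ 0 := mul_ne_zero hck hk1
  have hAg : A * hgCoef (A+1) (B-1) c (k+1)
      = (B-1) * (A+(k:ℂ)) * (A+(k:ℂ)+1) * hgCoef A B c k / ((c+(k:ℂ)) * ((k:ℂ)+1)) :=
    (eq_div_iff hw).mpr (st17_lemA A B c hc k)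
  rw [hgCoef_succ A B c k, mul_assoc, hAg]
  field_simp
  linear_combination (hgCoef A B c k) * hkey

/-- Shift operator relation (3.13) of the paper, with δ = (1/2)(a−c+1/2)(a−1/2):
−x(1−x)∂ₓF(a+u,a−u;c;x) + (−(1/2−a)x − c/2 + 1/2 + (u+1/2)(x−1/2) + δ/(u+1/2))F(a+u,a−u;c;x)
 = ((a+u)(a−c−u)/(2(u+1/2)))F(a+u+1,a−u−1;c;x). -/
theorem stmt_17 (a c u : ℂ) (hc : ∀ n : ℕ, c ≠ -(n : ℂ)) (hu : u ≠ -(1/2))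
    (δ : ℂ) (hδ : δ = (1/2) * (a - c + 1/2) * (a - 1/2)) :
    ∀ x : ℂ, ‖x‖ < 1 →
      -(x * (1 - x)) * deriv (fun y => gauss2F1 (a + u) (a - u) c y) x
        + (-((1/2 - a) * x) - (1/2) * c + 1/2 + (u + 1/2) * (x - 1/2) + δ / (u + 1/2))
          * gauss2F1 (a + u) (a - u) c x
      = ((a + u) * (a - c - u) / (2 * (u + 1/2))) * gauss2F1 (a + u + 1) (a - u - 1) c x := by
  intro x hx
  have hu2 : (u + 1/2 : ℂ) ≠ 0 := fun h => hu (by linear_combination h)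
  have h2u : (2*u + 1 : ℂ) ≠ 0 := fun h => hu (by linear_combination h/2)
  set A := a + u with hA
  set B := a - u with hB
  set β : ℂ := 1/2 - c/2 - (2*u+1)/4 + δ/(u+1/2) with hβ
  set γ' : ℂ := (a-c-u)/(2*u+1) with hγ'
  obtain ⟨D, hDsum, hderiv⟩ := st17_deriv A B c x hx
  have hF : HasSum (fun n : ℕ => hgCoef A B c n * x^n) (gauss2F1 A B c x) := by
    rw [gauss2F1_eq]; exact (st17_summable A B c x hx).hasSum
  have hG : HasSum (fun n : ℕ => hgCoef (A+1) (B-1) c n * x^n) (gauss2F1 (A+1) (B-1) c x) := by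
    rw [gauss2F1_eq]; exact (st17_summable (A+1) (B-1) c x hx).hasSum
  have hnf : HasSum (fun n : ℕ => (n:ℂ) * (hgCoef A B c n * x^n)) (x * D) := by
    have e : (fun n : ℕ => x * (hgCoef A B c n * ((n:ℂ) * x^(n-1))))
        = fun n : ℕ => (n:ℂ) * (hgCoef A B c n * x^n) := by
      funext n
      cases n with
      | zero => simp
      | succ m =>
        simp only [Nat.add_sub_cancel]
        push_cast
        ring
    rw [← e]; exact hDsum.mul_left x
  have hM : HasSum (fun n : ℕ => (β - (n:ℂ)) * (hgCoef A B c n * x^n))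
      (β * gauss2F1 A B c x - x * D) := by
    have e : (fun n : ℕ => β * (hgCoef A B c n * x^n) - (n:ℂ) * (hgCoef A B c n * x^n))
        = fun n : ℕ => (β - (n:ℂ)) * (hgCoef A B c n * x^n) := by
      funext n; ring
    rw [← e]; exact (hF.mul_left β).sub hnf
  have hN : HasSum (fun n : ℕ => ((n:ℂ) + A) * (hgCoef A B c n * x^n) * x)
      (x * (x * D) + A * x * gauss2F1 A B c x) := by
    have e : (fun n : ℕ => x * ((n:ℂ) * (hgCoef A B c n * x^n)) + A * x * (hgCoef A B c n * x^n))
        = fun n : ℕ => ((n:ℂ) + A) * (hgCoef A B c n * x^n) * x := by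
      funext n; ring
    rw [← e]; exact (hnf.mul_left x).add (hF.mul_left (A * x))
  have hE : (fun n : ℕ => (β - ((n+1:ℕ):ℂ)) * (hgCoef A B c (n+1) * x^(n+1))
        + ((n:ℂ) + A) * (hgCoef A B c n * x^n) * x)
      = fun n : ℕ => (γ' * A) * (hgCoef (A+1) (B-1) c (n+1) * x^(n+1)) := by
    funext n
    have hb2 : (2*u+1) * β = (2*u+1)*(1/2 - c/2) - (2*u+1)^2/4 + 2*δ := by
      rw [hβ]
      linear_combination (2*δ) * (div_self hu2)
    have hg2 : (2*u+1) * γ' = a - c - u := by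
      rw [hγ']
      linear_combination (a-c-u) * (div_self h2u)
    have hkey : (β - ((n:ℂ)+1)) * (((a+u)+(n:ℂ)) * ((a-u)+(n:ℂ)))
          + ((n:ℂ)+(a+u)) * ((c+(n:ℂ)) * ((n:ℂ)+1))
        = γ' * ((a-u)-1) * ((a+u)+(n:ℂ)) * ((a+u)+(n:ℂ)+1) := by
      apply mul_left_cancel₀ h2u
      linear_combination (((a+u)+(n:ℂ))*((a-u)+(n:ℂ))) * hb2
        + (2*((a+u)+(n:ℂ))*((a-u)+(n:ℂ))) * hδ
        - (((a-u)-1)*((a+u)+(n:ℂ))*((a+u)+(n:ℂ)+1)) * hg2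
    have hcid := st17_cid A B c β γ' hc n hkey
    push_cast
    linear_combination x^(n+1) * hcid
  have hval : ((β * gauss2F1 A B c x - x * D)
        - ∑ i ∈ Finset.range 1, (β - (i:ℂ)) * (hgCoef A B c i * x^i))
      + (x * (x * D) + A * x * gauss2F1 A B c x)
      = (γ' * A) * gauss2F1 (A+1) (B-1) c x
        - ∑ i ∈ Finset.range 1, (γ' * A) * (hgCoef (A+1) (B-1) c i * x^i) := by
    refine HasSum.unique ?_ ((hasSum_nat_add_iff' 1).mpr (hG.mul_left (γ' * A)))
    rw [← hE]
    exact ((hasSum_nat_add_iff' 1).mpr hM).add hN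
  simp only [Finset.sum_range_one, hgCoef_zero, Nat.cast_zero, pow_zero, mul_one, sub_zero] at hval
  have hb2 : (2*u+1) * β = (2*u+1)*(1/2 - c/2) - (2*u+1)^2/4 + 2*δ := by
    rw [hβ]
    linear_combination (2*δ) * (div_self hu2)
  have hg2 : (2*u+1) * γ' = a - c - u := by
    rw [hγ']
    linear_combination (a-c-u) * (div_self h2u)
  have hkey0 : β = γ' * A := by
    rw [hA]
    apply mul_left_cancel₀ h2u
    linear_combination hb2 + 2 * hδ - (a+u) * hg2
  rw [hderiv]
  linear_combination hval + hkey0 - (gauss2F1 A B c x) * hβ
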